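/- Let S be a finite set of binary strings of length k, and build a graph G on vertex set S by choosing, for each index j that is cut by some pair in S, one edge {x,y} where the pair (x,y) cuts j (with distinct indices giving distinct chosen edges). Then G is acyclic. -/

import Mathlib

lemma parity_walk (G : SimpleGraph ℕ) (b : ℕ → Bool) :
    ∀ {u v : ℕ} (p : G.Walk u v),
      (b u = b v) ↔ Even (p.darts.countP (fun d => !(b d.toProd.1 == b d.toProd.2))) := by
  intro u v p
  induction p with
  | nil => simp
  | @cons u v w h q ih =>
    simp only [SimpleGraph.Walk.darts_cons, List.countP_cons]
    by_cases hbv : b u = b v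
    · rw [hbv]
      simp only [beq_self_eq_true, Bool.not_true, if_false, Bool.false_eq_true]
      simpa using ih
    · have hp : (!(b u == b v)) = true := by simp [hbv]
      simp only [SimpleGraph.Dart.toProd, hp, if_true]
      rw [Nat.even_add_one, ← ih]
      revert hbv
      cases b u <;> cases b v <;> cases b w <;> simp [Nat.even_add_one, SimpleGraph.Dart.toProd]

/-- Build a graph `G` on a set `S` of binary strings of length `k` (encoded as
numbers below `2^k`, bit `i` of `x` being `x.testBit (k-1-i)`) by choosing, for
each index `j ∈ J` cut by some pair of `S`, one edge `{(e j).1, (e j).2}` where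
the chosen pair cuts `j` (agrees on bits below `j` and differs in bit `j`),
distinct indices giving distinct chosen edges.  Then `G` is acyclic. -/
theorem stmt1 (k : ℕ) (S : Set ℕ) (hS : ∀ x ∈ S, x < 2 ^ k)
    (J : Set ℕ) (hJ : ∀ j ∈ J, j < k)
    (e : ℕ → ℕ × ℕ)
    (he : ∀ j ∈ J, (e j).1 ∈ S ∧ (e j).2 ∈ S ∧ (e j).1 ≠ (e j).2 ∧
      (∀ i < j, ((e j).1).testBit (k - 1 - i) = ((e j).2).testBit (k - 1 - i)) ∧
      ((e j).1).testBit (k - 1 - j) ≠ ((e j).2).testBit (k - 1 - j))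
    (hinj : ∀ j ∈ J, ∀ j' ∈ J,
      ({(e j).1, (e j).2} : Set ℕ) = {(e j').1, (e j').2} → j = j')
    (G : SimpleGraph ℕ)
    (hG : ∀ x y, G.Adj x y ↔ x ≠ y ∧ ∃ j ∈ J, ({(e j).1, (e j).2} : Set ℕ) = {x, y}) :
    G.IsAcyclic := by
  classical
  intro v p hp
  -- labels of edges occurring in the cycle
  set L : Set ℕ := {j | j ∈ J ∧ s((e j).1, (e j).2) ∈ p.edges} with hLdef
  -- every edge of the cycle has a label
  have hlabel : ∀ d ∈ p.darts, ∃ j ∈ J,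
      ({(e j).1, (e j).2} : Set ℕ) = {d.toProd.1, d.toProd.2} := by
    intro d hd
    have hadj : G.Adj d.toProd.1 d.toProd.2 := d.adj
    exact ((hG _ _).mp hadj).2
  have hsym : ∀ (a b c d : ℕ), ({a, b} : Set ℕ) = {c, d} → s(a, b) = s(c, d) := by
    intro a b c d h
    rcases Set.pair_eq_pair_iff.mp h with ⟨h1, h2⟩ | ⟨h1, h2⟩
    · rw [h1, h2]
    · rw [h1, h2, Sym2.eq_swap]
  -- L is nonempty
  have hlen : 3 ≤ p.length := hp.three_le_length
  have hdartsne : p.darts ≠ [] := by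
    intro h
    have := p.length_darts
    rw [h] at this
    simp at this
    omega
  have hLne : L.Nonempty := by
    obtain ⟨d, hd⟩ := List.exists_mem_of_ne_nil _ hdartsne
    obtain ⟨j, hjJ, hjeq⟩ := hlabel d hd
    refine ⟨j, hjJ, ?_⟩
    have : d.edge ∈ p.edges := List.mem_map_of_mem hd
    rwa [show s((e j).1, (e j).2) = d.edge from hsym _ _ _ _ hjeq]
  set j := sInf L with hjdef
  have hjL : j ∈ L := Nat.sInf_mem hLne
  have hjJ : j ∈ J := hjL.1
  set b : ℕ → Bool := fun x => x.testBit (k - 1 - j) with hbdef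
  set s₀ : Sym2 ℕ := s((e j).1, (e j).2) with hs₀def
  -- key dichotomy for darts
  have key : ∀ d ∈ p.darts, ((d.edge = s₀) ↔ b d.toProd.1 ≠ b d.toProd.2) := by
    intro d hd
    obtain ⟨j', hj'J, hj'eq⟩ := hlabel d hd
    have hedge : d.edge = s((e j').1, (e j').2) := (hsym _ _ _ _ hj'eq).symm
    have hj'L : j' ∈ L := by
      refine ⟨hj'J, ?_⟩
      rw [← hedge]
      exact List.mem_map_of_mem hd
    have hjle : j ≤ j' := Nat.sInf_le hj'L
    rcases Set.pair_eq_pair_iff.mp hj'eq with ⟨h1, h2⟩ | ⟨h1, h2⟩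
    all_goals {
      constructor
      · intro hds
        have : s((e j').1, (e j').2) = s((e j).1, (e j).2) := by rw [← hedge, hds, hs₀def]
        have hsets : ({(e j').1, (e j').2} : Set ℕ) = {(e j).1, (e j).2} := by
          rcases Sym2.eq_iff.mp this with ⟨ha, hb⟩ | ⟨ha, hb⟩
          · rw [ha, hb]
          · rw [ha, hb, Set.pair_comm]
        have hjj : j' = j := hinj _ hj'J _ hjJ hsets
        have this := (he j' hj'J).2.2.2.2
        rw [hjj] at this h1 h2
        simp only [hbdef, ← h1, ← h2] at this ⊢
        first
          | exact this
          | exact fun hcon => this hcon.symm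
      · intro hb12
        by_contra hne
        have hjj' : j ≠ j' := by
          intro hcon
          exact hne (by rw [hedge, hs₀def, hcon])
        have hlt : j < j' := lt_of_le_of_ne hjle hjj'
        have := (he j' hj'J).2.2.2.1 j hlt
        simp only [hbdef, ← h1, ← h2] at hb12
        first
          | exact hb12 this
          | exact hb12 this.symm
    }
  -- s₀ occurs exactly once among the edges
  have hs₀mem : s₀ ∈ p.edges := hjL.2
  have hcount1 : p.edges.count s₀ = 1 :=
    List.count_eq_one_of_mem hp.edges_nodup hs₀mem
  have hcount2 : p.edges.count s₀ =
      p.darts.countP (fun d => !(b d.toProd.1 == b d.toProd.2)) := by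
    rw [SimpleGraph.Walk.edges, List.count_eq_countP, List.countP_map]
    apply List.countP_congr
    intro d hd
    have := key d hd
    simp only [Function.comp, beq_iff_eq, Bool.not_eq_true', beq_eq_false_iff_ne, ne_eq,
      decide_eq_true_eq]
    constructor
    · intro h; exact this.mp h
    · intro h; exact this.mpr h
  have heven : Even (p.darts.countP (fun d => !(b d.toProd.1 == b d.toProd.2))) :=
    (parity_walk G b p).mp rfl
  rw [← hcount2, hcount1] at heven
  exact (Nat.not_even_iff_odd.mpr odd_one) heven
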